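/- arXiv:2510.04930 — 3 statements merged into one kernel-verified Lean document; each statement's English description precedes it below -/
import Mathlib

section
/- Let z ~ N(0, I₂) and let a, b, c be unit vectors in ℝ². Then P((zᵀa)(zᵀb) ≤ 0 ∣ (zᵀa)(zᵀc) ≤ 0) = [arccos(aᵀc) + arccos(aᵀb) − arccos(bᵀc)] / (2·arccos(aᵀc)), provided arccos(aᵀc) > 0. -/
open MeasureTheory ProbabilityTheory Real Set

namespace GaussOrthantAux

lemma prod_gauss : (gaussianReal 0 1).prod (gaussianReal 0 1)
    = (volume.prod volume).withDensity (fun z => gaussianPDF 0 1 z.1 * gaussianPDF 0 1 z.2) := by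
  refine Measure.prod_eq (fun s t hs ht => ?_)
  rw [withDensity_apply _ (hs.prod ht), ← Measure.prod_restrict,
    lintegral_prod_mul (measurable_gaussianPDF 0 1).aemeasurable
      (measurable_gaussianPDF 0 1).aemeasurable,
    gaussianReal_apply 0 one_ne_zero, gaussianReal_apply 0 one_ne_zero]

lemma measurable_eventSet (u v : ℝ × ℝ) :
    MeasurableSet {z : ℝ × ℝ | (z.1*u.1+z.2*u.2)*(z.1*v.1+z.2*v.2) ≤ 0} := by
  apply measurableSet_le _ measurable_const
  fun_prop

lemma line_null (u : ℝ × ℝ) (hu : u.1^2 + u.2^2 = 1) :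
    (gaussianReal 0 1).prod (gaussianReal 0 1) {z : ℝ × ℝ | z.1*u.1 + z.2*u.2 = 0} = 0 := by
  have hmeas : MeasurableSet {z : ℝ × ℝ | z.1*u.1 + z.2*u.2 = 0} :=
    measurableSet_eq_fun (by fun_prop) measurable_const
  have hsing : ∀ s : Set ℝ, s.Subsingleton → gaussianReal 0 1 s = 0 := by
    intro s hs
    rcases hs.eq_empty_or_singleton with h | ⟨x, h⟩
    · simp [h]
    · rw [h]
      exact gaussianReal_absolutelyContinuous 0 one_ne_zero (volume_singleton)
  by_cases h2 : u.2 = 0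
  · have h1 : u.1 ≠ 0 := by intro h1; rw [h1, h2] at hu; norm_num at hu
    have hset : {z : ℝ×ℝ | z.1*u.1 + z.2*u.2 = 0} = ({(0:ℝ)} : Set ℝ) ×ˢ (univ : Set ℝ) := by
      ext z
      simp only [mem_setOf_eq, h2, mul_zero, add_zero, mul_eq_zero, h1, or_false,
        singleton_prod, image_univ, Prod.fst_eq_iff]
      aesop
    rw [hset, Measure.prod_prod, hsing _ subsingleton_singleton, zero_mul]
  · rw [Measure.prod_apply hmeas]
    have : ∀ x : ℝ, (Prod.mk x) ⁻¹' {z : ℝ × ℝ | z.1*u.1 + z.2*u.2 = 0}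
        = {-x * u.1 / u.2} := by
      intro x
      ext y
      simp only [mem_preimage, mem_setOf_eq, mem_singleton_iff]
      rw [eq_div_iff h2]
      constructor <;> intro h <;> linarith
    simp [this, hsing _ subsingleton_singleton]

lemma periodic_meas (S : Set ℝ) (hS : MeasurableSet S)
    (hper : ∀ x, x + 2*π ∈ S ↔ x ∈ S) (t : ℝ) :
    volume (S ∩ Ioc t (t + 2*π)) = volume (S ∩ Ioc (-π) (-π + 2*π)) := by
  haveI : Fact (0 < 2*π) := ⟨by positivity⟩
  have hper' : ∀ (n : ℤ) (x : ℝ), x + n * (2*π) ∈ S ↔ x ∈ S := by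
    intro n
    induction n using Int.induction_on with
    | zero => simp
    | succ k ih =>
      intro x
      rw [show x + (((k:ℤ)+1 : ℤ) : ℝ) * (2*π) = (x + (((k:ℤ)) : ℝ) * (2*π)) + 2*π by
        push_cast; ring, hper]
      exact ih x
    | pred k ih =>
      intro x
      rw [show x + ((-(k:ℤ)-1 : ℤ) : ℝ) * (2*π) = (x + ((-(k:ℤ)-1+1 : ℤ) : ℝ) * (2*π)) - 2*π by
        push_cast; ring]
      rw [← hper, sub_add_cancel]
      simp only [neg_add_cancel_right, sub_add_cancel]
      exact ih x
  have hU : (QuotientAddGroup.mk ⁻¹' ((QuotientAddGroup.mk '' S : Set (AddCircle (2*π)))) : Set ℝ) = S := by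
    ext x
    constructor
    · rintro ⟨s, hs, hmk⟩
      rw [QuotientAddGroup.eq] at hmk
      obtain ⟨n, hn⟩ := hmk
      have hx : x = s + n * (2*π) := by
        simp only [zsmul_eq_mul] at hn
        linarith
      rw [hx]
      exact (hper' n s).mpr hs
    · exact fun h => Set.mem_image_of_mem _ h
  have measU : MeasurableSet (QuotientAddGroup.mk '' S : Set (AddCircle (2*π))) := by
    rw [measurableSet_quotient]
    show MeasurableSet (QuotientAddGroup.mk ⁻¹' (QuotientAddGroup.mk '' S) : Set ℝ)
    rwa [hU]
  have key : ∀ r : ℝ, volume ((QuotientAddGroup.mk '' S : Set (AddCircle (2*π))))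
      = volume (S ∩ Ioc r (r + 2*π)) := by
    intro r
    rw [AddCircle.add_projection_respects_measure (T := 2*π) r measU, hU]
  rw [← key t, ← key (-π)]

lemma cos_le_meas (y : ℝ) (hy : -1 ≤ y) (hy' : y ≤ 1) (t : ℝ) :
    volume ({s : ℝ | Real.cos s ≤ y} ∩ Ioc t (t + 2*π)) = ENNReal.ofReal (2*(π - arccos y)) := by
  have hS : MeasurableSet {s : ℝ | Real.cos s ≤ y} :=
    measurableSet_le (by fun_prop) measurable_const
  rw [periodic_meas _ hS (fun x => by simp [Real.cos_add_two_pi]) t]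
  have hA0 : 0 ≤ arccos y := Real.arccos_nonneg y
  have hAπ : arccos y ≤ π := Real.arccos_le_pi y
  have hset : {s : ℝ | Real.cos s ≤ y} ∩ Ioc (-π) (-π + 2*π)
      = Ioc (-π) π \ Ioo (-(arccos y)) (arccos y) := by
    have h2 : -π + 2*π = π := by ring
    rw [h2]
    ext s
    simp only [mem_inter_iff, mem_setOf_eq, mem_diff, mem_Ioc, mem_Ioo, not_and, not_lt]
    constructor
    · rintro ⟨hcos, hs⟩
      refine ⟨hs, fun h1 => ?_⟩
      by_contra h2'
      push_neg at h2'
      have habs : |s| < arccos y := abs_lt.mpr ⟨h1, h2'⟩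
      have hlt : cos (arccos y) < cos |s| :=
        Real.strictAntiOn_cos ⟨abs_nonneg s, habs.le.trans hAπ⟩ ⟨hA0, hAπ⟩ habs
      rw [Real.cos_abs, Real.cos_arccos hy hy'] at hlt
      linarith
    · rintro ⟨hs, h⟩
      refine ⟨?_, hs⟩
      have habs : arccos y ≤ |s| := by
        rcases lt_or_ge (-(arccos y)) s with h1 | h1
        · exact le_abs.mpr (Or.inl (h h1))
        · exact le_abs.mpr (Or.inr (by linarith))
      have hle : cos |s| ≤ cos (arccos y) := by
        rcases eq_or_lt_of_le habs with h1 | h1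
        · rw [h1]
        · exact (Real.strictAntiOn_cos ⟨hA0, hAπ⟩
            ⟨abs_nonneg s, abs_le.mpr ⟨hs.1.le, hs.2⟩⟩ h1).le
      rwa [Real.cos_abs, Real.cos_arccos hy hy'] at hle
  rw [hset, measure_diff ?_ measurableSet_Ioo.nullMeasurableSet measure_Ioo_lt_top.ne,
    Real.volume_Ioc, Real.volume_Ioo]
  · rw [← ENNReal.ofReal_sub _ (by linarith : (0:ℝ) ≤ arccos y - -arccos y)]
    congr 1
    ring
  · intro s hs
    simp only [mem_Ioo] at hs
    simp only [mem_Ioc]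
    constructor <;> [linarith [hs.1]; linarith [hs.2]]

lemma angular (α β : ℝ) :
    volume ({θ : ℝ | Real.cos (θ - α) * Real.cos (θ - β) ≤ 0} ∩ Ioo (-π) π)
      = ENNReal.ofReal (2 * arccos (Real.cos (α - β))) := by
  set y : ℝ := -Real.cos (α - β) with hy_def
  have hy : -1 ≤ y := by have := Real.cos_le_one (α - β); simp [hy_def]; linarith
  have hy' : y ≤ 1 := by have := Real.neg_one_le_cos (α - β); simp [hy_def]; linarith
  set c : ℝ := α + β with hc_def
  set l : ℝ := -(2*π) - c with hl_def
  have hπ : 0 < π := Real.pi_pos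
  have hS₀ : MeasurableSet {s : ℝ | Real.cos s ≤ y} :=
    measurableSet_le (by fun_prop) measurable_const
  have hseteq : {θ : ℝ | Real.cos (θ - α) * Real.cos (θ - β) ≤ 0} ∩ Ioo (-π) π
      = (fun θ : ℝ => 2*θ - c) ⁻¹' ({s : ℝ | Real.cos s ≤ y} ∩ Ioo l (l + 4*π)) := by
    ext θ
    have expand : Real.cos (2*θ - c) = Real.cos (θ-α) * Real.cos (θ-β)
        - Real.sin (θ-α) * Real.sin (θ-β) := by
      rw [show 2*θ - c = (θ-α) + (θ-β) by rw [hc_def]; ring, Real.cos_add]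
    have expand2 : Real.cos (α-β) = Real.cos (θ-α) * Real.cos (θ-β)
        + Real.sin (θ-α) * Real.sin (θ-β) := by
      rw [show α-β = (θ-β) - (θ-α) by ring, Real.cos_sub]
      ring
    simp only [mem_inter_iff, mem_setOf_eq, mem_preimage, mem_Ioo]
    constructor
    · rintro ⟨h1, h2, h3⟩
      refine ⟨by rw [hy_def]; linarith, by rw [hl_def]; linarith, by rw [hl_def]; linarith⟩
    · rintro ⟨h1, h2, h3⟩
      rw [hy_def] at h1
      rw [hl_def] at h2 h3
      exact ⟨by linarith, by linarith, by linarith⟩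
  rw [hseteq]
  have hWmeas : MeasurableSet ({s : ℝ | Real.cos s ≤ y} ∩ Ioo l (l + 4*π)) :=
    hS₀.inter measurableSet_Ioo
  have hg : (fun θ : ℝ => 2*θ - c) = (fun s : ℝ => s + (-c)) ∘ (fun θ : ℝ => 2*θ) := by
    ext θ; simp; ring
  rw [hg, Set.preimage_comp]
  have hmap : volume ((fun θ : ℝ => 2*θ) ⁻¹' ((fun s : ℝ => s + (-c)) ⁻¹' 
      ({s : ℝ | Real.cos s ≤ y} ∩ Ioo l (l + 4*π)))) 
      = ENNReal.ofReal |(2:ℝ)⁻¹| * volume ((fun s : ℝ => s + (-c)) ⁻¹' 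
      ({s : ℝ | Real.cos s ≤ y} ∩ Ioo l (l + 4*π))) := by
    have hmeas2 : MeasurableSet ((fun s : ℝ => s + (-c)) ⁻¹' 
        ({s : ℝ | Real.cos s ≤ y} ∩ Ioo l (l + 4*π))) :=
      hWmeas.preimage (by fun_prop)
    rw [← Measure.map_apply (by fun_prop) hmeas2, Real.map_volume_mul_left two_ne_zero]
    simp
  rw [hmap, measure_preimage_add_right volume (-c) _]
  -- now compute volume (S₀ ∩ Ioo l (l+4π))
  have hsplit : {s : ℝ | Real.cos s ≤ y} ∩ Ioo l (l + 4*π)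
      = ({s : ℝ | Real.cos s ≤ y} ∩ Ioc l (l + 2*π))
        ∪ ({s : ℝ | Real.cos s ≤ y} ∩ Ioo (l + 2*π) (l + 4*π)) := by
    ext s
    simp only [mem_inter_iff, mem_setOf_eq, mem_union, mem_Ioo, mem_Ioc]
    constructor
    · rintro ⟨h1, h2, h3⟩
      rcases le_or_gt s (l + 2*π) with h | h
      · exact Or.inl ⟨h1, h2, h⟩
      · exact Or.inr ⟨h1, h, h3⟩
    · rintro (⟨h1, h2, h3⟩ | ⟨h1, h2, h3⟩)
      · exact ⟨h1, h2, by linarith⟩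
      · exact ⟨h1, by linarith, h3⟩
  have hdisj : Disjoint ({s : ℝ | Real.cos s ≤ y} ∩ Ioc l (l + 2*π))
      ({s : ℝ | Real.cos s ≤ y} ∩ Ioo (l + 2*π) (l + 4*π)) := by
    apply Set.disjoint_left.mpr
    rintro s ⟨_, _, h2⟩ ⟨_, h3, _⟩
    linarith
  have hioo : volume ({s : ℝ | Real.cos s ≤ y} ∩ Ioo (l + 2*π) (l + 4*π))
      = volume ({s : ℝ | Real.cos s ≤ y} ∩ Ioc (l + 2*π) (l + 4*π)) := by
    have : {s : ℝ | Real.cos s ≤ y} ∩ Ioc (l + 2*π) (l + 4*π)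
        = ({s : ℝ | Real.cos s ≤ y} ∩ Ioo (l + 2*π) (l + 4*π))
          ∪ ({s : ℝ | Real.cos s ≤ y} ∩ {l + 4*π}) := by
      ext s
      simp only [mem_inter_iff, mem_setOf_eq, mem_union, mem_Ioo, mem_Ioc, mem_singleton_iff]
      constructor
      · rintro ⟨h1, h2, h3⟩
        rcases eq_or_lt_of_le h3 with h | h
        · exact Or.inr ⟨h1, h⟩
        · exact Or.inl ⟨h1, h2, h⟩
      · rintro (⟨h1, h2, h3⟩ | ⟨h1, h2⟩)
        · exact ⟨h1, h2, h3.le⟩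
        · exact ⟨h1, by rw [h2]; constructor <;> linarith⟩
    have h0 : volume ({s : ℝ | Real.cos s ≤ y} ∩ {l + 4*π}) = 0 :=
      measure_mono_null Set.inter_subset_right volume_singleton
    rw [this]
    refine le_antisymm (measure_mono Set.subset_union_left) ?_
    calc volume (({s : ℝ | Real.cos s ≤ y} ∩ Ioo (l + 2*π) (l + 4*π))
          ∪ ({s : ℝ | Real.cos s ≤ y} ∩ {l + 4*π}))
        ≤ volume ({s : ℝ | Real.cos s ≤ y} ∩ Ioo (l + 2*π) (l + 4*π))
          + volume ({s : ℝ | Real.cos s ≤ y} ∩ {l + 4*π}) := measure_union_le _ _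
      _ = volume ({s : ℝ | Real.cos s ≤ y} ∩ Ioo (l + 2*π) (l + 4*π)) := by rw [h0, add_zero]
  rw [hsplit, measure_union hdisj (hS₀.inter measurableSet_Ioo), hioo,
    cos_le_meas y hy hy' l, show l + 4*π = (l + 2*π) + 2*π by ring,
    cos_le_meas y hy hy' (l + 2*π)]
  rw [← ENNReal.ofReal_add (by nlinarith [Real.arccos_le_pi y]) (by nlinarith [Real.arccos_le_pi y]),
    ← ENNReal.ofReal_mul (by positivity)]
  congr 1
  rw [hy_def, Real.arccos_neg]
  rw [abs_of_pos (by norm_num : (0:ℝ) < 2⁻¹)]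
  ring

lemma exists_angle (u : ℝ × ℝ) (hu : u.1^2 + u.2^2 = 1) :
    ∃ α : ℝ, u.1 = Real.cos α ∧ u.2 = Real.sin α := by
  have h1 : -1 ≤ u.1 := by nlinarith [sq_nonneg u.2]
  have h2 : u.1 ≤ 1 := by nlinarith [sq_nonneg u.2]
  rcases le_or_gt 0 u.2 with h | h
  · refine ⟨arccos u.1, (Real.cos_arccos h1 h2).symm, ?_⟩
    rw [Real.sin_arccos]
    rw [show (1:ℝ) - u.1^2 = u.2^2 by linarith, Real.sqrt_sq h]
  · refine ⟨-arccos u.1, by rw [Real.cos_neg, Real.cos_arccos h1 h2], ?_⟩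
    rw [Real.sin_neg, Real.sin_arccos]
    rw [show (1:ℝ) - u.1^2 = u.2^2 by linarith, Real.sqrt_sq_eq_abs, abs_of_neg h]
    ring

lemma radial_integral : ∫ r in Ioi (0:ℝ), r * Real.exp (-(r^2/2)) = 1 := by
  have hderiv : ∀ x ∈ Ioi (0:ℝ), HasDerivAt (fun r : ℝ => -Real.exp (-(r^2/2)))
      (x * Real.exp (-(x^2/2))) x := by
    intro x _
    have h1 : HasDerivAt (fun r : ℝ => -(r^2/2)) (-x) x := by
      have := (hasDerivAt_pow 2 x).div_const 2
      simpa using this.fun_neg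
    have := (h1.exp).fun_neg
    exact this.congr_deriv (by ring)
  have hcont : ContinuousWithinAt (fun r : ℝ => -Real.exp (-(r^2/2))) (Ici 0) 0 :=
    ((Real.continuous_exp.comp ((continuous_pow 2).div_const 2).neg).neg).continuousWithinAt
  have htend : Filter.Tendsto (fun r : ℝ => -Real.exp (-(r^2/2))) Filter.atTop (nhds 0) := by
    rw [show (0:ℝ) = -0 by ring]
    apply Filter.Tendsto.neg
    apply Real.tendsto_exp_atBot.comp
    have h1 : Filter.Tendsto (fun x : ℝ => x^2/2) Filter.atTop Filter.atTop :=
      (Filter.tendsto_pow_atTop two_ne_zero).atTop_div_const (by norm_num)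
    exact Filter.tendsto_neg_atBot_iff.mpr h1
  have := integral_Ioi_of_hasDerivAt_of_nonneg hcont hderiv
    (fun x hx => mul_nonneg (le_of_lt hx) (Real.exp_nonneg _)) htend
  simpa using this

lemma if_helper (x y w : ℝ) (hx : x ≠ 0) (hy : y ≠ 0) (hw : w ≠ 0) :
    (if x*y ≤ 0 ∧ x*w ≤ 0 then (1:ℝ) else 0)
      = ((if x*y ≤ 0 then (1:ℝ) else 0) + (if x*w ≤ 0 then (1:ℝ) else 0)
         - (if y*w ≤ 0 then (1:ℝ) else 0))/2 := by
  rcases hx.lt_or_gt with hx|hx <;> rcases hy.lt_or_gt with hy|hy <;>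
    rcases hw.lt_or_gt with hw|hw
  · simp [(mul_pos_of_neg_of_neg hx hy).not_ge, (mul_pos_of_neg_of_neg hx hw).not_ge,
      (mul_pos_of_neg_of_neg hy hw).not_ge]
  · simp [(mul_pos_of_neg_of_neg hx hy).not_ge, (mul_neg_of_neg_of_pos hx hw).le,
      (mul_neg_of_neg_of_pos hy hw).le]
  · simp [(mul_neg_of_neg_of_pos hx hy).le, (mul_pos_of_neg_of_neg hx hw).not_ge,
      (mul_neg_of_pos_of_neg hy hw).le]
  --
  · simp [(mul_neg_of_neg_of_pos hx hy).le, (mul_neg_of_neg_of_pos hx hw).le,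
      (mul_pos hy hw).not_ge]
  --
  · simp [(mul_neg_of_pos_of_neg hx hy).le, (mul_neg_of_pos_of_neg hx hw).le,
      (mul_pos_of_neg_of_neg hy hw).not_ge]
  --
  · simp [(mul_neg_of_pos_of_neg hx hy).le, (mul_pos hx hw).not_ge,
      (mul_neg_of_neg_of_pos hy hw).le]
  --
  · simp [(mul_pos hx hy).not_ge, (mul_neg_of_pos_of_neg hx hw).le,
      (mul_neg_of_pos_of_neg hy hw).le]
  · simp [(mul_pos hx hy).not_ge, (mul_pos hx hw).not_ge, (mul_pos hy hw).not_ge]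

lemma pair_prob (u v : ℝ × ℝ) (hu : u.1^2 + u.2^2 = 1) (hv : v.1^2 + v.2^2 = 1) :
    (gaussianReal 0 1).prod (gaussianReal 0 1)
      {z : ℝ × ℝ | (z.1*u.1+z.2*u.2)*(z.1*v.1+z.2*v.2) ≤ 0}
      = ENNReal.ofReal (arccos (u.1*v.1 + u.2*v.2) / π) := by
  obtain ⟨α, hα1, hα2⟩ := exists_angle u hu
  obtain ⟨β, hβ1, hβ2⟩ := exists_angle v hv
  have hπ : 0 < π := Real.pi_pos
  set E := {z : ℝ × ℝ | (z.1*u.1+z.2*u.2)*(z.1*v.1+z.2*v.2) ≤ 0} with hE_def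
  have hE : MeasurableSet E := measurable_eventSet u v
  set T := {θ : ℝ | Real.cos (θ - α) * Real.cos (θ - β) ≤ 0} with hT_def
  have hT : MeasurableSet T := measurableSet_le (by fun_prop) measurable_const
  set d : ℝ × ℝ → ℝ := fun z => gaussianPDFReal 0 1 z.1 * gaussianPDFReal 0 1 z.2 with hd_def
  have hd_nonneg : ∀ z, 0 ≤ d z := fun z =>
    mul_nonneg (gaussianPDFReal_nonneg 0 1 _) (gaussianPDFReal_nonneg 0 1 _)
  have hd_int : Integrable d (volume.prod volume) :=
    (integrable_gaussianPDFReal 0 1).mul_prod (integrable_gaussianPDFReal 0 1)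
  -- step 1 : μ E = ofReal (∫ z in E, d z)
  have step1 : (gaussianReal 0 1).prod (gaussianReal 0 1) E
      = ENNReal.ofReal (∫ z in E, d z ∂(volume.prod volume)) := by
    rw [prod_gauss, withDensity_apply _ hE,
      ofReal_integral_eq_lintegral_ofReal hd_int.restrict
        (Filter.Eventually.of_forall fun z => hd_nonneg z)]
    congr 1 with z
    rw [hd_def]
    exact (ENNReal.ofReal_mul (gaussianPDFReal_nonneg 0 1 _)).symm
  rw [step1]
  congr 1
  -- step 2 : polar coordinates
  rw [← integral_indicator hE, ← Measure.volume_eq_prod, ← integral_comp_polarCoord_symm]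
  have hptarget : polarCoord.target = Ioi (0:ℝ) ×ˢ Ioo (-π) π := rfl
  have keyfun : ∀ p ∈ polarCoord.target,
      p.1 • E.indicator d (polarCoord.symm p)
        = (p.1 * Real.exp (-(p.1^2/2))) * ((2*π)⁻¹ * T.indicator (fun _ => (1:ℝ)) p.2) := by
    rintro ⟨r, θ⟩ hp
    rw [hptarget] at hp
    obtain ⟨hr, hθ⟩ := hp
    simp only [mem_Ioi] at hr
    have hsymm : polarCoord.symm (r, θ) = (r * Real.cos θ, r * Real.sin θ) := rfl
    have hmem : polarCoord.symm (r, θ) ∈ E ↔ θ ∈ T := by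
      rw [hsymm, hE_def, hT_def]
      simp only [mem_setOf_eq]
      have e1 : r * Real.cos θ * u.1 + r * Real.sin θ * u.2 = r * Real.cos (θ - α) := by
        rw [Real.cos_sub, hα1, hα2]; ring
      have e2 : r * Real.cos θ * v.1 + r * Real.sin θ * v.2 = r * Real.cos (θ - β) := by
        rw [Real.cos_sub, hβ1, hβ2]; ring
      rw [e1, e2]
      constructor <;> intro h <;> nlinarith [mul_pos hr hr]
    have hdval : d (polarCoord.symm (r, θ)) = (2*π)⁻¹ * Real.exp (-(r^2/2)) := by
      rw [hsymm, hd_def]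
      simp only [gaussianPDFReal, NNReal.coe_one, mul_one, sub_zero]
      rw [show (√(2*π))⁻¹ * rexp (-(r * Real.cos θ)^2/2)
            * ((√(2*π))⁻¹ * rexp (-(r * Real.sin θ)^2/2))
          = (√(2*π) * √(2*π))⁻¹
            * (rexp (-(r * Real.cos θ)^2/2) * rexp (-(r * Real.sin θ)^2/2)) by
        rw [mul_inv]; ring]
      rw [← Real.exp_add, Real.mul_self_sqrt (by positivity),
        show -(r * Real.cos θ)^2/2 + -(r * Real.sin θ)^2/2
          = -(r^2/2) * ((Real.sin θ)^2 + (Real.cos θ)^2) by ring,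
        Real.sin_sq_add_cos_sq, mul_one]
    by_cases hmem2 : θ ∈ T
    · rw [Set.indicator_of_mem (hmem.mpr hmem2), Set.indicator_of_mem hmem2, hdval,
        smul_eq_mul]
      ring
    · rw [Set.indicator_of_notMem (fun h => hmem2 (hmem.mp h)),
        Set.indicator_of_notMem hmem2]
      simp
  rw [setIntegral_congr_fun polarCoord.open_target.measurableSet keyfun, hptarget,
    Measure.volume_eq_prod, ← Measure.prod_restrict,
    integral_prod_mul (fun r : ℝ => r * Real.exp (-(r^2/2)))
      (fun θ : ℝ => (2*π)⁻¹ * T.indicator (fun _ => (1:ℝ)) θ),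
    radial_integral, one_mul, integral_const_mul, setIntegral_indicator hT,
    setIntegral_const, smul_eq_mul, mul_one, Set.inter_comm, measureReal_def, angular α β]
  rw [ENNReal.toReal_ofReal (by nlinarith [Real.arccos_nonneg (Real.cos (α-β))])]
  rw [show u.1*v.1 + u.2*v.2 = Real.cos (α - β) by rw [Real.cos_sub, hα1, hα2, hβ1, hβ2]]
  field_simp

lemma inter_measure (a b c : ℝ × ℝ) (ha : a.1^2 + a.2^2 = 1) (hb : b.1^2 + b.2^2 = 1)
    (hc : c.1^2 + c.2^2 = 1) :
    ((gaussianReal 0 1).prod (gaussianReal 0 1)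
      ({z : ℝ × ℝ | (z.1*a.1+z.2*a.2)*(z.1*b.1+z.2*b.2) ≤ 0}
        ∩ {z : ℝ × ℝ | (z.1*a.1+z.2*a.2)*(z.1*c.1+z.2*c.2) ≤ 0})).toReal
    = (((gaussianReal 0 1).prod (gaussianReal 0 1)
          {z : ℝ × ℝ | (z.1*a.1+z.2*a.2)*(z.1*b.1+z.2*b.2) ≤ 0}).toReal
      + ((gaussianReal 0 1).prod (gaussianReal 0 1)
          {z : ℝ × ℝ | (z.1*a.1+z.2*a.2)*(z.1*c.1+z.2*c.2) ≤ 0}).toReal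
      - ((gaussianReal 0 1).prod (gaussianReal 0 1)
          {z : ℝ × ℝ | (z.1*b.1+z.2*b.2)*(z.1*c.1+z.2*c.2) ≤ 0}).toReal)/2 := by
  set ν := (gaussianReal 0 1).prod (gaussianReal 0 1) with hν
  set Eab := {z : ℝ × ℝ | (z.1*a.1+z.2*a.2)*(z.1*b.1+z.2*b.2) ≤ 0} with hEab
  set Eac := {z : ℝ × ℝ | (z.1*a.1+z.2*a.2)*(z.1*c.1+z.2*c.2) ≤ 0} with hEac
  set Ebc := {z : ℝ × ℝ | (z.1*b.1+z.2*b.2)*(z.1*c.1+z.2*c.2) ≤ 0} with hEbc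
  have hab : MeasurableSet Eab := measurable_eventSet a b
  have hac : MeasurableSet Eac := measurable_eventSet a c
  have hbc : MeasurableSet Ebc := measurable_eventSet b c
  have hN : ν ({z : ℝ × ℝ | z.1*a.1 + z.2*a.2 = 0} ∪ {z : ℝ × ℝ | z.1*b.1 + z.2*b.2 = 0}
      ∪ {z : ℝ × ℝ | z.1*c.1 + z.2*c.2 = 0}) = 0 :=
    measure_union_null (measure_union_null (line_null a ha) (line_null b hb)) (line_null c hc)
  have hae : ∀ᵐ z ∂ν, (Eab ∩ Eac).indicator (1 : (ℝ × ℝ) → ℝ) z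
      = ((Eab.indicator (1 : (ℝ × ℝ) → ℝ) z + Eac.indicator (1 : (ℝ × ℝ) → ℝ) z
        - Ebc.indicator (1 : (ℝ × ℝ) → ℝ) z)/2) := by
    refine (measure_eq_zero_iff_ae_notMem.mp hN).mono ?_
    intro z hz
    simp only [Set.mem_union, not_or, Set.mem_setOf_eq] at hz
    obtain ⟨⟨ha', hb'⟩, hc'⟩ := hz
    simp only [Set.indicator_apply, Set.mem_inter_iff, hEab, hEac, hEbc, Set.mem_setOf_eq,
      Pi.one_apply]
    exact if_helper _ _ _ ha' hb' hc'
  haveI : IsProbabilityMeasure ν := by rw [hν]; infer_instance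
  have iab : Integrable (Eab.indicator (fun _ => (1:ℝ))) ν := (integrable_const 1).indicator hab
  have iac : Integrable (Eac.indicator (fun _ => (1:ℝ))) ν := (integrable_const 1).indicator hac
  have ibc : Integrable (Ebc.indicator (fun _ => (1:ℝ))) ν := (integrable_const 1).indicator hbc
  simp only [← measureReal_def]
  rw [← integral_indicator_one (hab.inter hac), ← integral_indicator_one hab,
    ← integral_indicator_one hac, ← integral_indicator_one hbc]
  rw [integral_congr_ae hae]
  have i2 : Integrable (fun z => Eab.indicator (1 : (ℝ × ℝ) → ℝ) z
      + Eac.indicator (1 : (ℝ × ℝ) → ℝ) z) ν := iab.add iac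
  have iab2 : Integrable (fun z => Eab.indicator (1 : (ℝ × ℝ) → ℝ) z) ν := iab
  have iac2 : Integrable (fun z => Eac.indicator (1 : (ℝ × ℝ) → ℝ) z) ν := iac
  have ibc2 : Integrable (fun z => Ebc.indicator (1 : (ℝ × ℝ) → ℝ) z) ν := ibc
  rw [integral_div, integral_sub i2 ibc2, integral_add iab2 iac2]

end GaussOrthantAux

open MeasureTheory ProbabilityTheory

/-- For `z ~ N(0, I₂)` and unit vectors `a, b, c ∈ ℝ²` with `aᵀc < 1`
(so `arccos(aᵀc) > 0` and the conditioning event has positive probability),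
`P((zᵀa)(zᵀb) ≤ 0 ∣ (zᵀa)(zᵀc) ≤ 0)
  = [arccos(aᵀc) + arccos(aᵀb) − arccos(bᵀc)] / (2 arccos(aᵀc))`. -/
theorem gaussian_conditional_orthant
    (μ : Measure (ℝ × ℝ))
    (hμ : μ = (gaussianReal 0 1).prod (gaussianReal 0 1))
    (a b c : ℝ × ℝ)
    (ha : a.1 ^ 2 + a.2 ^ 2 = 1) (hb : b.1 ^ 2 + b.2 ^ 2 = 1)
    (hc : c.1 ^ 2 + c.2 ^ 2 = 1)
    (hac : a.1 * c.1 + a.2 * c.2 < 1) :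
    (μ ({z : ℝ × ℝ | (z.1 * a.1 + z.2 * a.2) * (z.1 * b.1 + z.2 * b.2) ≤ 0}
        ∩ {z : ℝ × ℝ | (z.1 * a.1 + z.2 * a.2) * (z.1 * c.1 + z.2 * c.2) ≤ 0})).toReal
      / (μ {z : ℝ × ℝ | (z.1 * a.1 + z.2 * a.2) * (z.1 * c.1 + z.2 * c.2) ≤ 0}).toReal
    = (Real.arccos (a.1 * c.1 + a.2 * c.2) + Real.arccos (a.1 * b.1 + a.2 * b.2)
        - Real.arccos (b.1 * c.1 + b.2 * c.2))
      / (2 * Real.arccos (a.1 * c.1 + a.2 * c.2)) := by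
  subst hμ
  have hπ : 0 < π := Real.pi_pos
  have hA : 0 ≤ arccos (a.1 * b.1 + a.2 * b.2) := Real.arccos_nonneg _
  have hB : 0 ≤ arccos (b.1 * c.1 + b.2 * c.2) := Real.arccos_nonneg _
  have hC : 0 < arccos (a.1 * c.1 + a.2 * c.2) := Real.arccos_pos.mpr hac
  rw [GaussOrthantAux.inter_measure a b c ha hb hc,
    GaussOrthantAux.pair_prob a b ha hb, GaussOrthantAux.pair_prob a c ha hc,
    GaussOrthantAux.pair_prob b c hb hc,
    ENNReal.toReal_ofReal (by positivity),
    ENNReal.toReal_ofReal (by positivity),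
    ENNReal.toReal_ofReal (by positivity)]
  rw [div_eq_div_iff (by positivity) (by positivity)]
  field_simp
  ring
end

section
/- In the toy model with μ_k = α^k(u₁ − m₁/m₂) + m₁/m₂ and ν_k = β^k u₂ where 0 < α < β < 1, u₁ = O(1), m₁, m₂ > 0, the cosine alignment r_k = μ_k/√(μ_k² + ε ν_k²) is strictly increasing in k for k large enough (once μ_k > 0), and r_k → 1 as k → ∞; consequently the angle between w(k) and the ground-truth direction e₁ (in the Σ-inner product with Σ = diag(1, ε)) tends to 0. -/
open Filter Topology

/-- In the toy model, with `μ_k = α^k (u₁ − m₁/m₂) + m₁/m₂`, `ν_k = β^k u₂`,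
`0 < α < β < 1`, `m₁, m₂ > 0`, `u₂ ≠ 0`, and `μ_k > 0` eventually, the
Σ-cosine alignment `r_k = μ_k / √(μ_k² + ε ν_k²)` is eventually strictly
increasing, tends to `1`, and hence the Σ-angle `arccos(r_k)` between `w(k)`
and the ground-truth direction `e₁` tends to `0`. -/
theorem toy_alignment_tendsto_one
    (α β ε m₁ m₂ u₁ u₂ : ℝ)
    (hα : 0 < α) (hαβ : α < β) (hβ : β < 1)
    (hm₁ : 0 < m₁) (hm₂ : 0 < m₂) (hε : ε ∈ Set.Ioo (0 : ℝ) 1)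
    (hu₂ : u₂ ≠ 0)
    (μ ν r : ℕ → ℝ)
    (hμ : ∀ k, μ k = α ^ k * (u₁ - m₁ / m₂) + m₁ / m₂)
    (hν : ∀ k, ν k = β ^ k * u₂)
    (hr : ∀ k, r k = μ k / Real.sqrt ((μ k) ^ 2 + ε * (ν k) ^ 2))
    (hpos : ∃ K : ℕ, ∀ k ≥ K, 0 < μ k) :
    (∃ K : ℕ, ∀ k ≥ K, r k < r (k + 1)) ∧
    Tendsto r atTop (𝓝 1) ∧
    Tendsto (fun k => Real.arccos (r k)) atTop (𝓝 0) := by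
  obtain ⟨hε0, hε1⟩ := hε
  set L := m₁ / m₂ with hLdef
  have hLpos : 0 < L := div_pos hm₁ hm₂
  have hα1 : α < 1 := hαβ.trans hβ
  have hβ0 : 0 < β := hα.trans hαβ
  have htα : Tendsto (fun k : ℕ => α ^ k) atTop (𝓝 0) :=
    tendsto_pow_atTop_nhds_zero_of_lt_one hα.le hα1
  have htβ : Tendsto (fun k : ℕ => β ^ k) atTop (𝓝 0) :=
    tendsto_pow_atTop_nhds_zero_of_lt_one hβ0.le hβ
  have hμt : Tendsto μ atTop (𝓝 L) := by
    have h : Tendsto (fun k : ℕ => α ^ k * (u₁ - L) + L) atTop (𝓝 (0 * (u₁ - L) + L)) :=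
      (htα.mul_const _).add_const L
    have hfun : μ = fun k : ℕ => α ^ k * (u₁ - L) + L := funext hμ
    rw [hfun]
    simpa using h
  have hνt : Tendsto ν atTop (𝓝 0) := by
    have h : Tendsto (fun k : ℕ => β ^ k * u₂) atTop (𝓝 (0 * u₂)) := htβ.mul_const _
    have hfun : ν = fun k : ℕ => β ^ k * u₂ := funext hν
    rw [hfun]
    simpa using h
  -- limit of r
  have hDt : Tendsto (fun k => (μ k) ^ 2 + ε * (ν k) ^ 2) atTop (𝓝 (L ^ 2)) := by
    have h : Tendsto (fun k => (μ k) ^ 2 + ε * (ν k) ^ 2) atTop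
        (𝓝 (L ^ 2 + ε * 0 ^ 2)) := (hμt.pow 2).add (tendsto_const_nhds.mul (hνt.pow 2))
    simpa using h
  have hsqrtt : Tendsto (fun k => Real.sqrt ((μ k) ^ 2 + ε * (ν k) ^ 2)) atTop (𝓝 L) := by
    have := (Real.continuous_sqrt.tendsto (L ^ 2)).comp hDt
    simpa [Function.comp_def, Real.sqrt_sq hLpos.le] using this
  have hrt : Tendsto r atTop (𝓝 1) := by
    have h := hμt.div hsqrtt hLpos.ne'
    have hfun : r = fun k => μ k / Real.sqrt ((μ k) ^ 2 + ε * (ν k) ^ 2) := funext hr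
    rw [hfun]
    simpa [Pi.div_def, div_self hLpos.ne'] using h
  refine ⟨?_, hrt, ?_⟩
  · -- eventual strict monotonicity
    obtain ⟨K₀, hK₀⟩ := hpos
    have hsmall : ∀ᶠ k in atTop, α ^ k * ((β - α) * |u₁ - L|) < L * (1 - β) := by
      have h0 : Tendsto (fun k : ℕ => α ^ k * ((β - α) * |u₁ - L|)) atTop (𝓝 0) := by
        simpa using htα.mul_const ((β - α) * |u₁ - L|)
      exact h0.eventually_lt_const (mul_pos hLpos (by linarith))
    obtain ⟨K₁, hK₁⟩ := eventually_atTop.mp hsmall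
    refine ⟨max K₀ K₁, fun k hk => ?_⟩
    have hk0 : K₀ ≤ k := le_trans (le_max_left _ _) hk
    have hk1 : K₁ ≤ k := le_trans (le_max_right _ _) hk
    have hμk : 0 < μ k := hK₀ k hk0
    have hstep : β * μ k < μ (k + 1) := by
      have h1 := hK₁ k hk1
      have h2 : α ^ k * (u₁ - L) ≤ α ^ k * |u₁ - L| :=
        mul_le_mul_of_nonneg_left (le_abs_self _) (by positivity)
      have h4 : (β - α) * (α ^ k * (u₁ - L)) ≤ (β - α) * (α ^ k * |u₁ - L|) :=
        mul_le_mul_of_nonneg_left h2 (by linarith)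
      have h3 : α ^ (k + 1) = α * α ^ k := pow_succ' α k
      rw [hμ k, hμ (k + 1), h3]
      nlinarith [h1, h4]
    have hμk1 : 0 < μ (k + 1) := lt_trans (by positivity) hstep
    have hνk : ν k ≠ 0 := by
      rw [hν k]; exact mul_ne_zero (pow_ne_zero _ hβ0.ne') hu₂
    have hνsq : 0 < (ν k) ^ 2 := by positivity
    have hν1 : ν (k + 1) = β * ν k := by rw [hν, hν, pow_succ']; ring
    have hD0 : 0 < (μ k) ^ 2 + ε * (ν k) ^ 2 := by positivity
    have hD1 : 0 < (μ (k + 1)) ^ 2 + ε * (ν (k + 1)) ^ 2 := by positivity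
    rw [hr, hr, div_lt_div_iff₀ (Real.sqrt_pos.mpr hD0) (Real.sqrt_pos.mpr hD1)]
    have hsq : (μ k * Real.sqrt ((μ (k + 1)) ^ 2 + ε * (ν (k + 1)) ^ 2)) ^ 2
        < (μ (k + 1) * Real.sqrt ((μ k) ^ 2 + ε * (ν k) ^ 2)) ^ 2 := by
      rw [mul_pow, mul_pow, Real.sq_sqrt hD1.le, Real.sq_sqrt hD0.le, hν1]
      have h4 : (β * μ k) ^ 2 < (μ (k + 1)) ^ 2 := by
        exact pow_lt_pow_left₀ hstep (by positivity) two_ne_zero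
      have h5 := mul_lt_mul_of_pos_right h4 (mul_pos hε0 hνsq)
      nlinarith [h5]
    exact lt_of_pow_lt_pow_left₀ 2 (by positivity) hsq
  · have h := (Real.continuous_arccos.tendsto 1).comp hrt
    simpa [Function.comp_def, Real.arccos_one] using h
end

section
/- Let x = (x⁽¹⁾, x⁽²⁾) be distributed as z ~ N(0, diag(1, ε)) conditioned on |z⁽¹⁾| ≥ s, and let y = sign(x⁽¹⁾). Then E[y·x] = (m₁, 0) where m₁ = φ(s)/Q(s), and E[x xᵀ] = diag(m₂, ε) where m₂ = 1 + s·m₁. Consequently the population least-squares solution argmin_w E[(xᵀw − y)²] equals (m₁/m₂, 0), which is a positive multiple of the Bayes-optimal direction e₁. -/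
open MeasureTheory ProbabilityTheory Real Set Filter
open scoped ENNReal NNReal

noncomputable def phiD (x : ℝ) : ℝ := (Real.sqrt (2 * Real.pi))⁻¹ * Real.exp (-x ^ 2 / 2)

lemma phiD_eq (x : ℝ) : phiD x = (Real.sqrt (2 * Real.pi))⁻¹ * Real.exp (-(2⁻¹) * x ^ 2) := by
  unfold phiD
  congr 1
  exact congrArg Real.exp (by ring)

lemma phiD_pos (x : ℝ) : 0 < phiD x := by
  unfold phiD; positivity

lemma phiD_cont : Continuous phiD := by
  unfold phiD; continuity

lemma phiD_pdf : gaussianPDFReal 0 1 = phiD := by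
  funext x
  simp [gaussianPDFReal, phiD]

lemma int_phiD : Integrable phiD := by
  have h := (integrable_exp_neg_mul_sq (by norm_num : (0:ℝ) < 2⁻¹)).const_mul
    ((Real.sqrt (2 * Real.pi))⁻¹)
  exact h.congr (ae_of_all _ fun x => (phiD_eq x).symm)

lemma int_xphiD : Integrable (fun x => x * phiD x) := by
  have h := (integrable_mul_exp_neg_mul_sq (by norm_num : (0:ℝ) < 2⁻¹)).const_mul
    ((Real.sqrt (2 * Real.pi))⁻¹)
  refine h.congr (ae_of_all _ fun x => ?_)
  simp only [phiD_eq]; ring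

lemma int_x2phiD : Integrable (fun x => x ^ 2 * phiD x) := by
  have h0 := integrable_rpow_mul_exp_neg_mul_sq (by norm_num : (0:ℝ) < 2⁻¹)
    (by norm_num : (-1:ℝ) < 2)
  simp only [Real.rpow_two] at h0
  have h := h0.const_mul ((Real.sqrt (2 * Real.pi))⁻¹)
  refine h.congr (ae_of_all _ fun x => ?_)
  simp only [phiD_eq]; ring

lemma tendsto_phiD : Tendsto phiD atTop (nhds 0) := by
  have h1 : Tendsto (fun x : ℝ => -x ^ 2 / 2) atTop atBot := by
    apply Filter.Tendsto.atBot_div_const (by norm_num : (0:ℝ) < 2)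
    exact tendsto_neg_atBot_iff.mpr (tendsto_pow_atTop (by norm_num))
  have h2 : Tendsto (fun x : ℝ => Real.exp (-x ^ 2 / 2)) atTop (nhds 0) :=
    Real.tendsto_exp_atBot.comp h1
  have h3 := h2.const_mul ((Real.sqrt (2 * Real.pi))⁻¹)
  rw [mul_zero] at h3
  exact h3

lemma tendsto_xphiD : Tendsto (fun x => x * phiD x) atTop (nhds 0) := by
  have h0 := rpow_mul_exp_neg_mul_sq_isLittleO_exp_neg (by norm_num : (0:ℝ) < 2⁻¹) 1
  have h1 : Tendsto (fun x : ℝ => Real.exp (-(1/2) * x)) atTop (nhds 0) := by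
    apply Real.tendsto_exp_atBot.comp
    exact Filter.Tendsto.const_mul_atTop_of_neg (by norm_num) tendsto_id
  have h2 : Tendsto (fun x : ℝ => x ^ (1:ℝ) * Real.exp (-(2⁻¹) * x ^ 2)) atTop (nhds 0) :=
    h0.trans_tendsto h1
  have h3 := h2.const_mul ((Real.sqrt (2 * Real.pi))⁻¹)
  rw [mul_zero] at h3
  refine h3.congr' ?_
  filter_upwards with x
  rw [Real.rpow_one, phiD_eq]; ring

lemma hasDeriv_negphiD (x : ℝ) : HasDerivAt (fun y => -phiD y) (x * phiD x) x := by
  have h1 : HasDerivAt (fun y : ℝ => -y ^ 2 / 2) (-x) x := by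
    have := ((hasDerivAt_pow 2 x).neg).div_const 2
    refine this.congr_deriv ?_
    simp; ring
  have h2 := (h1.exp).const_mul ((Real.sqrt (2 * Real.pi))⁻¹)
  have h3 := h2.neg
  refine h3.congr_deriv ?_
  unfold phiD; ring

lemma hasDeriv_phiD (x : ℝ) : HasDerivAt phiD (-(x * phiD x)) x := by
  have := (hasDeriv_negphiD x).neg
  simpa [Pi.neg_def] using this

lemma hasDeriv_negxphiD (x : ℝ) :
    HasDerivAt (fun y => -(y * phiD y)) (x ^ 2 * phiD x - phiD x) x := by
  have h1 := ((hasDerivAt_id x).mul (hasDeriv_phiD x)).neg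
  refine h1.congr_deriv ?_
  simp only [id_eq]
  ring

lemma K1 (s : ℝ) : ∫ x in Ioi s, x * phiD x = phiD s := by
  have h := integral_Ioi_of_hasDerivAt_of_tendsto' (a := s)
    (fun x _ => hasDeriv_negphiD x) int_xphiD.integrableOn
    (by simpa using tendsto_phiD.neg)
  simpa using h

lemma K2 (s : ℝ) :
    ∫ x in Ioi s, x ^ 2 * phiD x = s * phiD s + ∫ x in Ioi s, phiD x := by
  have h := integral_Ioi_of_hasDerivAt_of_tendsto' (a := s)
    (fun x _ => hasDeriv_negxphiD x) ((int_x2phiD.sub int_phiD).integrableOn)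
    (by simpa using tendsto_xphiD.neg)
  rw [integral_sub int_x2phiD.integrableOn int_phiD.integrableOn] at h
  have := sub_eq_iff_eq_add.mp h
  linarith [this]

lemma measurable_signR : Measurable Real.sign := by
  have : Real.sign = fun r : ℝ => if r < 0 then (-1:ℝ) else if 0 < r then 1 else 0 := by
    funext r; rfl
  rw [this]
  exact Measurable.ite (measurableSet_lt measurable_id' measurable_const) measurable_const
    (Measurable.ite (measurableSet_lt measurable_const measurable_id') measurable_const
      measurable_const)

lemma signR_mul_self (x : ℝ) : Real.sign x * x = |x| := by
  rcases lt_trichotomy x 0 with h | h | h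
  · rw [Real.sign_of_neg h, abs_of_neg h]; ring
  · simp [h]
  · rw [Real.sign_of_pos h, abs_of_pos h]; ring

-- integral conversion
lemma gauss_setIntegral (A : Set ℝ) (hA : MeasurableSet A) (f : ℝ → ℝ) :
    ∫ x in A, f x ∂(gaussianReal 0 1) = ∫ x in A, f x * phiD x := by
  rw [gaussianReal_of_var_ne_zero 0 one_ne_zero, gaussianPDF_def,
    restrict_withDensity hA]
  have : (fun x => ENNReal.ofReal (gaussianPDFReal 0 1 x))
      = (fun x => ((fun y => (gaussianPDFReal 0 1 y).toNNReal) x : ℝ≥0∞)) := rfl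
  rw [this, integral_withDensity_eq_integral_smul]
  · congr 1 with x
    rw [NNReal.smul_def, smul_eq_mul, Real.coe_toNNReal _ (gaussianPDFReal_nonneg 0 1 x),
      phiD_pdf, mul_comm]
  · exact (measurable_gaussianPDFReal 0 1).real_toNNReal

lemma gauss_measure (A : Set ℝ) : ((gaussianReal 0 1) A).toReal = ∫ x in A, phiD x := by
  rw [gaussianReal_apply_eq_integral 0 one_ne_zero, ENNReal.toReal_ofReal, phiD_pdf]
  exact integral_nonneg fun x => gaussianPDFReal_nonneg 0 1 x

lemma Qval (t : ℝ) :
    ((gaussianReal 0 1) {x | t ≤ x}).toReal = ∫ x in Ioi t, phiD x := by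
  have : {x : ℝ | t ≤ x} = Ici t := rfl
  rw [this, gauss_measure, integral_Ici_eq_integral_Ioi]

lemma Qpos (t : ℝ) : 0 < ∫ x in Ioi t, phiD x := by
  rw [setIntegral_pos_iff_support_of_nonneg_ae
    (ae_of_all _ fun x => (phiD_pos x).le) int_phiD.integrableOn]
  have : Function.support phiD = Set.univ := by
    ext x; simp [Function.support, (phiD_pos x).ne']
  rw [this, Set.univ_inter]
  simp [Real.volume_Ioi]

variable {s : ℝ}

lemma A_ae (hs : 0 ≤ s) :
    ({x : ℝ | s ≤ |x|} : Set ℝ) =ᵐ[volume] (Iic (-s) ∪ Ioi s : Set ℝ) := by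
  rw [Filter.eventuallyEq_set]
  rw [ae_iff]
  refine measure_mono_null (fun x hx => ?_) (measure_singleton s)
  simp only [mem_setOf_eq, mem_union, mem_Iic, mem_Ioi, mem_singleton_iff] at hx ⊢
  by_contra hxs
  apply hx
  constructor
  · intro h
    rcases le_or_gt x 0 with h0 | h0
    · left; rw [abs_of_nonpos h0] at h; linarith
    · right
      rw [abs_of_pos h0] at h
      exact h.lt_of_ne (fun e => hxs e.symm)
  · rintro (h | h)
    · rw [abs_of_nonpos (by linarith)]; linarith
    · rw [abs_of_pos (by linarith)]; linarith

lemma setInt_A (hs : 0 ≤ s) (f : ℝ → ℝ) (hf : Integrable f) :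
    ∫ x in {x : ℝ | s ≤ |x|}, f x
      = (∫ x in Ioi s, f (-x)) + ∫ x in Ioi s, f x := by
  rw [setIntegral_congr_set (A_ae hs),
    setIntegral_union (by
      rw [Set.disjoint_left]
      intro x hx1 hx2
      simp only [mem_Iic, mem_Ioi] at hx1 hx2
      linarith) measurableSet_Ioi hf.integrableOn hf.integrableOn,
    ]
  have h := integral_comp_neg_Iic (-s) (fun x => f (-x))
  simp only [neg_neg] at h
  rw [h]

lemma phiD_neg (x : ℝ) : phiD (-x) = phiD x := by simp [phiD]

lemma measA : MeasurableSet {x : ℝ | s ≤ |x|} :=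
  measurableSet_le measurable_const continuous_abs.measurable

lemma int_absxphiD : Integrable (fun x => |x| * phiD x) := by
  refine int_xphiD.abs.congr (ae_of_all _ fun x => ?_)
  show |x * phiD x| = |x| * phiD x
  rw [abs_mul, abs_of_pos (phiD_pos x)]

lemma VA_sign (hs : 0 ≤ s) :
    ∫ x in {x : ℝ | s ≤ |x|}, Real.sign x * x * phiD x = 2 * phiD s := by
  have he : (fun x => Real.sign x * x * phiD x) = fun x => |x| * phiD x := by
    funext x; rw [signR_mul_self]
  rw [he, setInt_A hs _ int_absxphiD]
  have h1 : ∫ x in Ioi s, |(-x)| * phiD (-x) = ∫ x in Ioi s, x * phiD x := by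
    refine setIntegral_congr_fun measurableSet_Ioi fun x hx => ?_
    rw [phiD_neg, abs_neg, abs_of_pos (lt_of_le_of_lt hs hx)]
  have h2 : ∫ x in Ioi s, |x| * phiD x = ∫ x in Ioi s, x * phiD x := by
    refine setIntegral_congr_fun measurableSet_Ioi fun x hx => ?_
    rw [abs_of_pos (lt_of_le_of_lt hs hx)]
  rw [h1, h2, K1]; ring

lemma VA_sq (hs : 0 ≤ s) :
    ∫ x in {x : ℝ | s ≤ |x|}, x ^ 2 * phiD x
      = 2 * (s * phiD s + ∫ x in Ioi s, phiD x) := by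
  rw [setInt_A hs _ int_x2phiD]
  simp only [phiD_neg, neg_sq]
  rw [K2]; ring

lemma VA_one (hs : 0 ≤ s) :
    ∫ x in {x : ℝ | s ≤ |x|}, phiD x = 2 * ∫ x in Ioi s, phiD x := by
  rw [setInt_A hs _ int_phiD]
  simp only [phiD_neg]
  ring

lemma total_phiD : ∫ x, phiD x = 1 := by
  rw [← phiD_pdf]
  exact integral_gaussianPDFReal_eq_one 0 one_ne_zero

lemma Q0 : ∫ x in Ioi (0:ℝ), phiD x = 1 / 2 := by
  have hsplit := intervalIntegral.integral_Iic_add_Ioi (b := (0:ℝ)) int_phiD.integrableOn int_phiD.integrableOn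
  have h := integral_comp_neg_Iic (0:ℝ) phiD
  simp only [neg_zero, phiD_neg] at h
  rw [total_phiD] at hsplit
  linarith

lemma total_x2phiD : ∫ x, x ^ 2 * phiD x = 1 := by
  have hsplit := intervalIntegral.integral_Iic_add_Ioi (b := (0:ℝ)) int_x2phiD.integrableOn
    int_x2phiD.integrableOn
  have h := integral_comp_neg_Iic (0:ℝ) (fun x => x ^ 2 * phiD x)
  simp only [neg_zero, phiD_neg, neg_sq] at h
  have h2 := K2 0
  rw [Q0] at h2
  simp only [zero_mul, zero_add] at h2
  linarith

lemma total_xphiD : ∫ x, x * phiD x = 0 := by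
  have h := integral_neg_eq_self (fun x => x * phiD x) (volume : Measure ℝ)
  simp only [phiD_neg, neg_mul] at h
  have h2 : ∫ x, -(x * phiD x) = - ∫ x, x * phiD x := integral_neg _
  rw [h2] at h
  linarith

lemma gauss_integral (f : ℝ → ℝ) :
    ∫ x, f x ∂(gaussianReal 0 1) = ∫ x, f x * phiD x := by
  have h := gauss_setIntegral univ MeasurableSet.univ f
  simpa using h

lemma Ig_id : Integrable (fun x => x) (gaussianReal 0 1) := by
  rw [gaussianReal_of_var_ne_zero 0 one_ne_zero, gaussianPDF_def,
    integrable_withDensity_iff (measurable_gaussianPDFReal 0 1).ennreal_ofReal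
      (ae_of_all _ fun x => ENNReal.ofReal_lt_top)]
  refine int_xphiD.congr (ae_of_all _ fun x => ?_)
  simp only [phiD_pdf, ENNReal.toReal_ofReal (phiD_pos x).le]

lemma Ig_sq : Integrable (fun x => x ^ 2) (gaussianReal 0 1) := by
  rw [gaussianReal_of_var_ne_zero 0 one_ne_zero, gaussianPDF_def,
    integrable_withDensity_iff (measurable_gaussianPDFReal 0 1).ennreal_ofReal
      (ae_of_all _ fun x => ENNReal.ofReal_lt_top)]
  refine int_x2phiD.congr (ae_of_all _ fun x => ?_)
  simp only [phiD_pdf, ENNReal.toReal_ofReal (phiD_pos x).le]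

lemma Gmean : ∫ x, x ∂(gaussianReal 0 1) = 0 := by
  rw [gauss_integral]; exact total_xphiD

lemma Gsq : ∫ x, x ^ 2 ∂(gaussianReal 0 1) = 1 := by
  rw [gauss_integral]; exact total_x2phiD

section Eps
variable (ε : NNReal) (hε : ε ≠ 0)

lemma map_eps : (gaussianReal 0 1).map (fun x => Real.sqrt ε * x) = gaussianReal 0 ε := by
  have h := gaussianReal_map_const_mul (μ := 0) (v := 1) (Real.sqrt ε)
  have h2 : (⟨(Real.sqrt ε) ^ 2, sq_nonneg _⟩ : NNReal) * 1 = ε := by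
    ext
    simp [Real.sq_sqrt ε.2]
  rw [mul_zero] at h
  convert h using 2
  exact h2.symm

lemma Ige_id : Integrable (fun y => y) (gaussianReal 0 ε) := by
  rw [← map_eps ε]
  rw [integrable_map_measure (measurable_id'.aestronglyMeasurable)
    (measurable_const_mul _).aemeasurable]
  exact (Ig_id.const_mul _).congr (ae_of_all _ fun x => rfl)

lemma Ige_sq : Integrable (fun y => y ^ 2) (gaussianReal 0 ε) := by
  rw [← map_eps ε]
  rw [integrable_map_measure ((measurable_id'.pow_const 2).aestronglyMeasurable)
    (measurable_const_mul _).aemeasurable]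
  have h := (Ig_sq.const_mul ((Real.sqrt ε) ^ 2))
  refine h.congr (ae_of_all _ fun x => ?_)
  show Real.sqrt ε ^ 2 * x ^ 2 = (Real.sqrt ε * x) ^ 2
  ring

lemma Ge_mean : ∫ y, y ∂(gaussianReal 0 ε) = 0 := by
  rw [← map_eps ε, integral_map (measurable_const_mul _).aemeasurable
    measurable_id'.aestronglyMeasurable]
  rw [integral_const_mul, Gmean, mul_zero]

lemma Ge_sq : ∫ y, y ^ 2 ∂(gaussianReal 0 ε) = (ε : ℝ) := by
  rw [← map_eps ε, integral_map (measurable_const_mul _).aemeasurable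
    (measurable_id'.pow_const 2).aestronglyMeasurable]
  have : ∀ x : ℝ, (Real.sqrt ε * x) ^ 2 = (ε : ℝ) * x ^ 2 := fun x => by
    simp [mul_pow, Real.sq_sqrt ε.2]
  simp only [this]
  rw [integral_const_mul, Gsq, mul_one]

end Eps

set_option maxHeartbeats 2000000 in
/-- Population moments of `x = z` conditioned on `|z⁽¹⁾| ≥ s`, for
`z ~ N(0, diag(1, ε))`, with label `y = sign(x⁽¹⁾)`:
`E[y·x] = (m₁, 0)` with `m₁ = φ(s)/Q(s)`, `E[x xᵀ] = diag(m₂, ε)` with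
`m₂ = 1 + s m₁`, and consequently the population least-squares solution
`argmin_w E[(xᵀw − y)²]` is `(m₁/m₂, 0)`, a positive multiple of the
Bayes-optimal direction `e₁`. -/
theorem toy_population_moments
    (ε : NNReal) (hε : 0 < ε) (s : ℝ) (hs : 0 ≤ s)
    (ν : Measure (ℝ × ℝ))
    (hν : ν = (gaussianReal 0 1).prod (gaussianReal 0 ε))
    (E : Set (ℝ × ℝ)) (hE : E = {p : ℝ × ℝ | s ≤ |p.1|})
    (φ Q : ℝ → ℝ)
    (hφ : ∀ t, φ t = (Real.sqrt (2 * Real.pi))⁻¹ * Real.exp (-t ^ 2 / 2))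
    (hQ : ∀ t, Q t = ((gaussianReal 0 1) {x | t ≤ x}).toReal)
    (m₁ m₂ : ℝ) (hm₁ : m₁ = φ s / Q s) (hm₂ : m₂ = 1 + s * m₁) :
    (∫ p in E, Real.sign p.1 * p.1 ∂ν) / (ν E).toReal = m₁ ∧
    (∫ p in E, Real.sign p.1 * p.2 ∂ν) / (ν E).toReal = 0 ∧
    (∫ p in E, p.1 ^ 2 ∂ν) / (ν E).toReal = m₂ ∧
    (∫ p in E, p.1 * p.2 ∂ν) / (ν E).toReal = 0 ∧
    (∫ p in E, p.2 ^ 2 ∂ν) / (ν E).toReal = (ε : ℝ) ∧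
    0 < m₁ / m₂ ∧
    (∀ w : ℝ × ℝ,
      (∫ p in E, (p.1 * (m₁ / m₂) + p.2 * 0 - Real.sign p.1) ^ 2 ∂ν)
          / (ν E).toReal
        ≤ (∫ p in E, (p.1 * w.1 + p.2 * w.2 - Real.sign p.1) ^ 2 ∂ν)
          / (ν E).toReal) := by
  subst hν hE
  set A : Set ℝ := {x : ℝ | s ≤ |x|} with hA
  have hEA : {p : ℝ × ℝ | s ≤ |p.1|} = A ×ˢ (univ : Set ℝ) := by
    ext p; simp [hA]
  have hres : ((gaussianReal 0 1).prod (gaussianReal 0 ε)).restrict {p : ℝ × ℝ | s ≤ |p.1|}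
      = ((gaussianReal 0 1).restrict A).prod (gaussianReal 0 ε) := by
    rw [hEA, ← Measure.prod_restrict, Measure.restrict_univ]
  set Qs : ℝ := ∫ x in Ioi s, phiD x with hQsdef
  have hQspos : 0 < Qs := Qpos s
  have hφs : φ s = phiD s := by rw [hφ]; rfl
  have hQsv : Q s = Qs := by rw [hQ, Qval]
  have hm1 : m₁ = phiD s / Qs := by rw [hm₁, hφs, hQsv]
  have hm1pos : 0 < m₁ := by rw [hm1]; exact div_pos (phiD_pos s) hQspos
  have hm2pos : 0 < m₂ := by rw [hm₂]; nlinarith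
  have hνE : (((gaussianReal 0 1).prod (gaussianReal 0 ε)) {p : ℝ × ℝ | s ≤ |p.1|}).toReal
      = 2 * Qs := by
    rw [hEA, Measure.prod_prod, measure_univ, mul_one, gauss_measure]
    exact VA_one hs
  set ρ : Measure (ℝ × ℝ) := ((gaussianReal 0 1).restrict A).prod (gaussianReal 0 ε) with hρ
  -- one-dimensional restricted integrals
  have Hsgn1 : ∫ x in A, Real.sign x * x ∂(gaussianReal 0 1) = 2 * phiD s := by
    rw [gauss_setIntegral _ measA]; exact VA_sign hs
  have Hsq1 : ∫ x in A, x ^ 2 ∂(gaussianReal 0 1) = 2 * (s * phiD s + Qs) := by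
    rw [gauss_setIntegral _ measA]; exact VA_sq hs
  have Hone1 : ∫ x in A, (1 : ℝ) ∂(gaussianReal 0 1) = 2 * Qs := by
    rw [integral_const, smul_eq_mul, mul_one, measureReal_restrict_apply_univ, Measure.real, gauss_measure]
    exact VA_one hs
  have Hone2 : ∫ y, (1 : ℝ) ∂(gaussianReal 0 ε) = 1 := by simp
  -- product integrals over ρ
  have Hsx : ∫ p, Real.sign p.1 * p.1 ∂ρ = 2 * phiD s := by
    have h := integral_prod_mul (μ := (gaussianReal 0 1).restrict A)
      (ν := gaussianReal 0 ε) (fun x => Real.sign x * x) (fun _ => (1 : ℝ))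
    simp only [mul_one] at h
    rw [h, Hone2, mul_one]; exact Hsgn1
  have Hsy : ∫ p, Real.sign p.1 * p.2 ∂ρ = 0 := by
    have h := integral_prod_mul (μ := (gaussianReal 0 1).restrict A)
      (ν := gaussianReal 0 ε) (fun x => Real.sign x) (fun y => y)
    rw [h, Ge_mean, mul_zero]
  have Hxx : ∫ p, p.1 ^ 2 ∂ρ = 2 * (s * phiD s + Qs) := by
    have h := integral_prod_mul (μ := (gaussianReal 0 1).restrict A)
      (ν := gaussianReal 0 ε) (fun x => x ^ 2) (fun _ => (1 : ℝ))
    simp only [mul_one] at h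
    rw [h, Hone2, mul_one]; exact Hsq1
  have Hxy : ∫ p, p.1 * p.2 ∂ρ = 0 := by
    have h := integral_prod_mul (μ := (gaussianReal 0 1).restrict A)
      (ν := gaussianReal 0 ε) (fun x => x) (fun y => y)
    rw [h, Ge_mean, mul_zero]
  have Hyy : ∫ p, p.2 ^ 2 ∂ρ = (2 * Qs) * (ε : ℝ) := by
    have h := integral_prod_mul (μ := (gaussianReal 0 1).restrict A)
      (ν := gaussianReal 0 ε) (fun _ => (1 : ℝ)) (fun y => y ^ 2)
    simp only [one_mul] at h
    rw [h, Hone1, Ge_sq]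
  -- integrability over ρ
  have isgn : Integrable (fun x => Real.sign x) ((gaussianReal 0 1).restrict A) := by
    refine Integrable.mono' (integrable_const 1) measurable_signR.aestronglyMeasurable
      (ae_of_all _ fun x => ?_)
    rw [Real.norm_eq_abs]
    rcases Real.sign_apply_eq x with h | h | h <;> rw [h] <;> norm_num
  have isgnsq : Integrable (fun x => Real.sign x ^ 2) ((gaussianReal 0 1).restrict A) := by
    refine Integrable.mono' (integrable_const 1) (measurable_signR.pow_const 2).aestronglyMeasurable
      (ae_of_all _ fun x => ?_)
    rw [Real.norm_eq_abs]
    rcases Real.sign_apply_eq x with h | h | h <;> rw [h] <;> norm_num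
  have iabs : Integrable (fun x => Real.sign x * x) ((gaussianReal 0 1).restrict A) :=
    (Ig_id.restrict (s := A)).abs.congr (ae_of_all _ fun x => (signR_mul_self x).symm)
  have i1 : Integrable (fun p : ℝ × ℝ => p.1 ^ 2) ρ := by
    have h := (Ig_sq.restrict (s := A)).mul_prod (integrable_const (1 : ℝ)
      (μ := gaussianReal 0 ε))
    simpa using h
  have i2 : Integrable (fun p : ℝ × ℝ => p.2 ^ 2) ρ := by
    have h := (integrable_const (1 : ℝ) (μ := (gaussianReal 0 1).restrict A)).mul_prod
      (Ige_sq ε)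
    simpa using h
  have i3 : Integrable (fun p : ℝ × ℝ => Real.sign p.1 ^ 2) ρ := by
    have h := isgnsq.mul_prod (integrable_const (1 : ℝ) (μ := gaussianReal 0 ε))
    simpa using h
  have i4 : Integrable (fun p : ℝ × ℝ => p.1 * p.2) ρ :=
    (Ig_id.restrict (s := A)).mul_prod (Ige_id ε)
  have i5 : Integrable (fun p : ℝ × ℝ => Real.sign p.1 * p.1) ρ := by
    have h := iabs.mul_prod (integrable_const (1 : ℝ) (μ := gaussianReal 0 ε))
    simpa using h
  have i6 : Integrable (fun p : ℝ × ℝ => Real.sign p.1 * p.2) ρ :=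
    isgn.mul_prod (Ige_id ε)
  -- expansion of the quadratic loss
  have key : ∀ u v : ℝ, ∫ p, (p.1 * u + p.2 * v - Real.sign p.1) ^ 2 ∂ρ
      = u ^ 2 * (2 * (s * phiD s + Qs)) + v ^ 2 * ((2 * Qs) * (ε : ℝ))
        + (∫ p, Real.sign p.1 ^ 2 ∂ρ) - (2 * u) * (2 * phiD s) := by
    intro u v
    have hpt : (fun p : ℝ × ℝ => (p.1 * u + p.2 * v - Real.sign p.1) ^ 2)
        = fun p => (u ^ 2 * p.1 ^ 2 + v ^ 2 * p.2 ^ 2 + Real.sign p.1 ^ 2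
            + (2 * u * v) * (p.1 * p.2))
          - ((2 * u) * (Real.sign p.1 * p.1) + (2 * v) * (Real.sign p.1 * p.2)) := by
      funext p; ring
    have ja : Integrable (fun p : ℝ × ℝ => u ^ 2 * p.1 ^ 2) ρ := i1.const_mul _
    have jb : Integrable (fun p : ℝ × ℝ => v ^ 2 * p.2 ^ 2) ρ := i2.const_mul _
    have jd : Integrable (fun p : ℝ × ℝ => 2 * u * v * (p.1 * p.2)) ρ := i4.const_mul _
    have je : Integrable (fun p : ℝ × ℝ => 2 * u * (Real.sign p.1 * p.1)) ρ := i5.const_mul _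
    have jf : Integrable (fun p : ℝ × ℝ => 2 * v * (Real.sign p.1 * p.2)) ρ := i6.const_mul _
    have jsum1 : Integrable (fun p : ℝ × ℝ => u ^ 2 * p.1 ^ 2 + v ^ 2 * p.2 ^ 2) ρ := ja.add jb
    have jsum2 : Integrable (fun p : ℝ × ℝ =>
        u ^ 2 * p.1 ^ 2 + v ^ 2 * p.2 ^ 2 + Real.sign p.1 ^ 2) ρ := jsum1.add i3
    have jsum3 : Integrable (fun p : ℝ × ℝ =>
        u ^ 2 * p.1 ^ 2 + v ^ 2 * p.2 ^ 2 + Real.sign p.1 ^ 2 + 2 * u * v * (p.1 * p.2)) ρ :=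
      jsum2.add jd
    have jsum4 : Integrable (fun p : ℝ × ℝ =>
        2 * u * (Real.sign p.1 * p.1) + 2 * v * (Real.sign p.1 * p.2)) ρ := je.add jf
    rw [hpt, integral_sub jsum3 jsum4, integral_add jsum2 jd, integral_add jsum1 i3,
      integral_add ja jb, integral_add je jf, integral_const_mul, integral_const_mul,
      integral_const_mul, integral_const_mul, integral_const_mul, Hxx, Hyy, Hxy, Hsx, Hsy]
    ring
  have h2Q : (0 : ℝ) < 2 * Qs := by linarith
  refine ⟨?_, ?_, ?_, ?_, ?_, div_pos hm1pos hm2pos, ?_⟩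
  · rw [hres, hνE, Hsx, hm1, mul_div_mul_left _ _ (two_ne_zero)]
  · rw [hres, hνE, Hsy, zero_div]
  · rw [hres, hνE, Hxx, hm₂, hm1, mul_div_mul_left _ _ (two_ne_zero)]
    field_simp
    ring
  · rw [hres, hνE, Hxy, zero_div]
  · rw [hres, hνE, Hyy]
    exact mul_div_cancel_left₀ _ h2Q.ne'
  · intro w
    rw [hres, hνE]
    have hden : Qs + s * phiD s ≠ 0 := by nlinarith [phiD_pos s, mul_nonneg hs (phiD_pos s).le]
    have hb : m₁ / m₂ = phiD s / (Qs + s * phiD s) := by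
      rw [hm₂, hm1]
      field_simp
    have hlink : 2 * phiD s = (2 * (s * phiD s + Qs)) * (m₁ / m₂) := by
      rw [hb]
      field_simp
      rw [eq_div_iff (by rw [mul_comm]; exact hden)]
      ring
    have hSxx : (0 : ℝ) < 2 * (s * phiD s + Qs) := by
      nlinarith [phiD_pos s, mul_nonneg hs (phiD_pos s).le]
    have hSyy : (0 : ℝ) ≤ (2 * Qs) * (ε : ℝ) := mul_nonneg (by linarith) ε.2
    have hK : (∫ p, (p.1 * (m₁ / m₂) + p.2 * 0 - Real.sign p.1) ^ 2 ∂ρ)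
        ≤ ∫ p, (p.1 * w.1 + p.2 * w.2 - Real.sign p.1) ^ 2 ∂ρ := by
      rw [key (m₁ / m₂) 0, key w.1 w.2, hlink]
      nlinarith [mul_nonneg hSxx.le (sq_nonneg (w.1 - m₁ / m₂)), mul_nonneg hSyy (sq_nonneg w.2),
        sq_nonneg w.2]
    exact div_le_div_of_nonneg_right hK h2Q.le
end
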